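/- Affine normalization commutes with parallel duplicating reduction: if P is an affine normal form of M (i.e. M →*_aff P and P has no →_aff-redex) and M ⇒_dup N, then there exists a term Q such that P ⇒_dup Q and N →*_aff Q. -/

import Mathlib

variable {Loc Ch : Type}

/-- FMC terms: variable, push `[N]a.M`, pop `a<x>.M` (de Bruijn binder),
choice `i`, case `M ; i -> N`, and loop `M^i`. -/
inductive Tm (Loc Ch : Type) : Type where
  | var : ℕ → Tm Loc Ch
  | push : Tm Loc Ch → Loc → Tm Loc Ch → Tm Loc Ch
  | pop : Loc → Tm Loc Ch → Tm Loc Ch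
  | choice : Ch → Tm Loc Ch
  | caseOf : Tm Loc Ch → Ch → Tm Loc Ch → Tm Loc Ch
  | loop : Tm Loc Ch → Ch → Tm Loc Ch

namespace Tm

/-- Shift the free de Bruijn indices `≥ d` up by one. -/
def lift : Tm Loc Ch → ℕ → Tm Loc Ch
  | var n, d => if n < d then var n else var (n + 1)
  | push N a M, d => push (N.lift d) a (M.lift d)
  | pop a M, d => pop a (M.lift (d + 1))
  | choice i, _ => choice i
  | caseOf M i N, d => caseOf (M.lift d) i (N.lift d)
  | loop M i, d => loop (M.lift d) i

/-- Capture-avoiding substitution `{N/k}M` for the de Bruijn index `k`. -/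
def subst : Tm Loc Ch → ℕ → Tm Loc Ch → Tm Loc Ch
  | var n, k, N => if n = k then N else if n < k then var n else var (n - 1)
  | push P a M, k, N => push (P.subst k N) a (M.subst k N)
  | pop a M, k, N => pop a (M.subst (k + 1) (N.lift 0))
  | choice i, _, _ => choice i
  | caseOf M i P, k, N => caseOf (M.subst k N) i (P.subst k N)
  | loop M i, k, N => loop (M.subst k N) i

end Tm

/-- Affine reduction: the contextual closure of the rules passage, select,
reject, prefix(pop), prefix(push), associate. -/
inductive AffStep : Tm Loc Ch → Tm Loc Ch → Prop where
  | passage (N : Tm Loc Ch) (a b : Loc) (M : Tm Loc Ch) (h : a ≠ b) :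
      AffStep (.push N b (.pop a M)) (.pop a (.push (N.lift 0) b M))
  | select (i : Ch) (M : Tm Loc Ch) :
      AffStep (.caseOf (.choice i) i M) M
  | reject (i j : Ch) (M : Tm Loc Ch) (h : i ≠ j) :
      AffStep (.caseOf (.choice i) j M) (.choice i)
  | prefixPop (a : Loc) (N : Tm Loc Ch) (i : Ch) (M : Tm Loc Ch) :
      AffStep (.caseOf (.pop a N) i M) (.pop a (.caseOf N i (M.lift 0)))
  | prefixPush (P : Tm Loc Ch) (a : Loc) (N : Tm Loc Ch) (i : Ch) (M : Tm Loc Ch) :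
      AffStep (.caseOf (.push P a N) i M) (.push P a (.caseOf N i M))
  | assoc (P : Tm Loc Ch) (i : Ch) (N M : Tm Loc Ch) :
      AffStep (.caseOf (.caseOf P i N) i M) (.caseOf P i (.caseOf N i M))
  | push_left (N N' : Tm Loc Ch) (a : Loc) (M : Tm Loc Ch) :
      AffStep N N' → AffStep (.push N a M) (.push N' a M)
  | push_right (N : Tm Loc Ch) (a : Loc) (M M' : Tm Loc Ch) :
      AffStep M M' → AffStep (.push N a M) (.push N a M')
  | pop_body (a : Loc) (M M' : Tm Loc Ch) :
      AffStep M M' → AffStep (.pop a M) (.pop a M')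
  | case_left (M M' : Tm Loc Ch) (i : Ch) (N : Tm Loc Ch) :
      AffStep M M' → AffStep (.caseOf M i N) (.caseOf M' i N)
  | case_right (M : Tm Loc Ch) (i : Ch) (N N' : Tm Loc Ch) :
      AffStep N N' → AffStep (.caseOf M i N) (.caseOf M i N')
  | loop_body (M M' : Tm Loc Ch) (i : Ch) :
      AffStep M M' → AffStep (.loop M i) (.loop M' i)

/-- Parallel duplicating reduction `M ⇒_dup N`: `N` is the marked reduct of
`M` for some marking of beta- and unroll-redexes. -/
inductive Par : Tm Loc Ch → Tm Loc Ch → Prop where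
  | var (n : ℕ) : Par (.var n) (.var n)
  | choice (i : Ch) : Par (.choice i) (.choice i)
  | push (N N' : Tm Loc Ch) (a : Loc) (M M' : Tm Loc Ch) :
      Par N N' → Par M M' → Par (.push N a M) (.push N' a M')
  | pop (a : Loc) (M M' : Tm Loc Ch) :
      Par M M' → Par (.pop a M) (.pop a M')
  | caseOf (M M' : Tm Loc Ch) (i : Ch) (N N' : Tm Loc Ch) :
      Par M M' → Par N N' → Par (.caseOf M i N) (.caseOf M' i N')
  | loop (M M' : Tm Loc Ch) (i : Ch) :
      Par M M' → Par (.loop M i) (.loop M' i)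
  | beta (N N' : Tm Loc Ch) (a : Loc) (M M' : Tm Loc Ch) :
      Par N N' → Par M M' → Par (.push N a (.pop a M)) (M'.subst 0 N')
  | unroll (M M' : Tm Loc Ch) (i : Ch) :
      Par M M' → Par (.loop M i) (.caseOf M' i (.loop M' i))

/-- `P` is an affine normal form of `M`. -/
def AffNF (M P : Tm Loc Ch) : Prop :=
  Relation.ReflTransGen AffStep M P ∧ ∀ Q, ¬ AffStep P Q

namespace Tm

/-- Polynomial interpretation giving termination of affine reduction. -/
def mu : Tm Loc Ch → ℕ
  | var _ => 2
  | choice _ => 2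
  | push N _ M => mu N + 2 * mu M
  | pop _ M => mu M + 1
  | caseOf M _ N => mu M * mu M * mu N
  | loop M _ => mu M + 1

lemma two_le_mu (M : Tm Loc Ch) : 2 ≤ mu M := by
  induction M <;> simp [mu] <;> nlinarith

lemma mu_lift (M : Tm Loc Ch) : ∀ d, mu (M.lift d) = mu M := by
  induction M <;> intro d <;> simp [lift, mu, *]
  split <;> simp [mu]

lemma lift_lift (M : Tm Loc Ch) : ∀ d e, e ≤ d →
    (M.lift d).lift e = (M.lift e).lift (d + 1) := by
  induction M with
  | var n =>
    intro d e h
    by_cases h1 : n < e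
    · simp [lift, h1, show n < d by omega, show n < d + 1 by omega]
    · by_cases h2 : n < d
      · simp [lift, h1, h2, show n + 1 < d + 1 by omega]
      · simp [lift, h1, h2, show ¬ n + 1 < e by omega, show ¬ n + 1 < d + 1 by omega]
  | push N a M ihN ihM => intro d e h; simp [lift, ihN d e h, ihM d e h]
  | pop a M ih => intro d e h; simp [lift, ih (d+1) (e+1) (by omega)]
  | choice i => intro d e h; simp [lift]
  | caseOf M i N ihM ihN => intro d e h; simp [lift, ihM d e h, ihN d e h]
  | loop M i ih => intro d e h; simp [lift, ih d e h]

/-- `d ≤ k`: lifting commutes with substitution. -/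
lemma lift_subst_le (M : Tm Loc Ch) : ∀ k N d, d ≤ k →
    (M.subst k N).lift d = (M.lift d).subst (k + 1) (N.lift d) := by
  induction M with
  | var n =>
    intro k N d h
    rcases Nat.lt_trichotomy n k with h1 | h1 | h1
    · by_cases h2 : n < d
      · simp [subst, lift, Nat.ne_of_lt h1, h1, h2, show n ≠ k + 1 by omega,
          show n < k + 1 by omega]
      · simp [subst, lift, Nat.ne_of_lt h1, h1, h2, show n + 1 ≠ k + 1 by omega,
          show n + 1 < k + 1 by omega]
    · subst h1; simp [subst, lift, show ¬ n < d by omega]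
    · simp [subst, lift, Nat.ne_of_gt h1, show ¬ n < k by omega,
        show ¬ n - 1 < d by omega, show ¬ n < d by omega,
        show n + 1 ≠ k + 1 by omega, show ¬ n + 1 < k + 1 by omega,
        show n + 1 - 1 = n - 1 + 1 by omega]
  | push N a M ihN ihM => intro k P d h; simp [subst, lift, ihN k P d h, ihM k P d h]
  | pop a M ih =>
    intro k N d h
    simp [subst, lift, ih (k+1) (N.lift 0) (d+1) (by omega), lift_lift N d 0 (by omega)]
  | choice i => intro k N d h; simp [subst, lift]
  | caseOf M i N ihM ihN => intro k P d h; simp [subst, lift, ihM k P d h, ihN k P d h]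
  | loop M i ih => intro k N d h; simp [subst, lift, ih k N d h]

/-- `k ≤ d`: lifting commutes with substitution. -/
lemma lift_subst_ge (M : Tm Loc Ch) : ∀ k N d, k ≤ d →
    (M.subst k N).lift d = (M.lift (d + 1)).subst k (N.lift d) := by
  induction M with
  | var n =>
    intro k N d h
    rcases Nat.lt_trichotomy n k with h1 | h1 | h1
    · simp [subst, lift, Nat.ne_of_lt h1, h1, show n < d by omega,
        show n < d + 1 by omega]
    · subst h1; simp [subst, lift, show n < d + 1 by omega]
    · by_cases h2 : n < d + 1
      · simp [subst, lift, Nat.ne_of_gt h1, show ¬ n < k by omega, h2,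
          show n - 1 < d by omega]
      · simp [subst, lift, Nat.ne_of_gt h1, show ¬ n < k by omega, h2,
          show ¬ n - 1 < d by omega, show n + 1 ≠ k by omega,
          show ¬ n + 1 < k by omega, show n + 1 - 1 = n - 1 + 1 by omega]
  | push N a M ihN ihM => intro k P d h; simp [subst, lift, ihN k P d h, ihM k P d h]
  | pop a M ih =>
    intro k N d h
    simp [subst, lift, ih (k+1) (N.lift 0) (d+1) (by omega), lift_lift N d 0 (by omega)]
  | choice i => intro k N d h; simp [subst, lift]
  | caseOf M i N ihM ihN => intro k P d h; simp [subst, lift, ihM k P d h, ihN k P d h]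
  | loop M i ih => intro k N d h; simp [subst, lift, ih k N d h]

lemma subst_lift_self (M : Tm Loc Ch) : ∀ d N, (M.lift d).subst d N = M := by
  induction M with
  | var n =>
    intro d N
    by_cases h : n < d
    · simp [lift, subst, h, Nat.ne_of_lt h]
    · simp [lift, subst, h, show n + 1 ≠ d by omega, show ¬ n + 1 < d by omega]
  | push N a M ihN ihM => intro d P; simp [lift, subst, ihN, ihM]
  | pop a M ih => intro d N; simp [lift, subst, ih]
  | choice i => intro d N; simp [lift, subst]
  | caseOf M i N ihM ihN => intro d P; simp [lift, subst, ihM, ihN]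
  | loop M i ih => intro d N; simp [lift, subst, ih]

end Tm
open Tm

lemma AffStep.mu_lt {M M' : Tm Loc Ch} (h : AffStep M M') : mu M' < mu M := by
  induction h with
  | passage N a b M h => simp [mu, mu_lift]; omega
  | select i M => simp [mu]; nlinarith [two_le_mu M]
  | reject i j M h => simp [mu]; nlinarith [two_le_mu M]
  | prefixPop a N i M =>
    simp [mu, mu_lift]; nlinarith [two_le_mu M, two_le_mu N]
  | prefixPush P a N i M =>
    have key : ∀ p n m : ℕ, 2 ≤ p → 2 ≤ n → 2 ≤ m →
        p + 2 * (n * n * m) < (p + 2 * n) * (p + 2 * n) * m := by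
      intro p n m hp hn hm
      nlinarith [Nat.mul_le_mul hp hm, Nat.mul_le_mul hn hm]
    simpa [mu] using key _ _ _ (two_le_mu P) (two_le_mu N) (two_le_mu M)
  | assoc P i N M =>
    have key : ∀ p n m : ℕ, 2 ≤ p → 2 ≤ n → 2 ≤ m →
        p * p * (n * n * m) < p * p * n * (p * p * n) * m := by
      intro p n m hp hn hm
      have e : p * p * n * (p * p * n) * m = (p * p) * ((p * p) * (n * n * m)) := by ring
      rw [e]
      have h1 : 0 < (p * p) * (n * n * m) := by positivity
      calc p * p * (n * n * m) = 1 * ((p * p) * (n * n * m)) := by ring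
        _ < (p * p) * ((p * p) * (n * n * m)) :=
          Nat.mul_lt_mul_of_lt_of_le (by nlinarith) (le_refl _) h1
    simpa [mu] using key _ _ _ (two_le_mu P) (two_le_mu N) (two_le_mu M)
  | push_left N N' a M h ih => simp [mu]; omega
  | push_right N a M M' h ih => simp [mu]; omega
  | pop_body a M M' h ih => simp [mu]; omega
  | case_left M M' i N h ih =>
    simp only [mu]
    have h1 : M'.mu * M'.mu < M.mu * M.mu := Nat.mul_lt_mul'' ih ih
    exact Nat.mul_lt_mul_of_lt_of_le h1 (le_refl N.mu)
      (Nat.lt_of_lt_of_le Nat.zero_lt_two (two_le_mu N))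
  | case_right M i N N' h ih =>
    simp only [mu]
    exact Nat.mul_lt_mul_of_le_of_lt (le_refl _) ih
      (Nat.lt_of_lt_of_le Nat.zero_lt_two
        (le_trans (two_le_mu M) (Nat.le_mul_of_pos_right _
          (Nat.lt_of_lt_of_le Nat.zero_lt_two (two_le_mu M)))))
  | loop_body M M' i h ih => simp [mu]; omega

lemma AffStep.lift {M M' : Tm Loc Ch} (h : AffStep M M') :
    ∀ d, AffStep (M.lift d) (M'.lift d) := by
  induction h with
  | passage N a b M h =>
    intro d
    have := AffStep.passage (N.lift d) a b (M.lift (d+1)) h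
    simpa [Tm.lift, lift_lift N d 0 (by omega)] using this
  | select i M => intro d; exact AffStep.select i (M.lift d)
  | reject i j M h => intro d; exact AffStep.reject i j (M.lift d) h
  | prefixPop a N i M =>
    intro d
    have := AffStep.prefixPop a (N.lift (d+1)) i (M.lift d)
    simpa [Tm.lift, lift_lift M d 0 (by omega)] using this
  | prefixPush P a N i M => intro d; exact AffStep.prefixPush _ _ _ _ _
  | assoc P i N M => intro d; exact AffStep.assoc _ _ _ _
  | push_left N N' a M h ih => intro d; exact AffStep.push_left _ _ _ _ (ih d)
  | push_right N a M M' h ih => intro d; exact AffStep.push_right _ _ _ _ (ih d)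
  | pop_body a M M' h ih => intro d; exact AffStep.pop_body _ _ _ (ih (d+1))
  | case_left M M' i N h ih => intro d; exact AffStep.case_left _ _ _ _ (ih d)
  | case_right M i N N' h ih => intro d; exact AffStep.case_right _ _ _ _ (ih d)
  | loop_body M M' i h ih => intro d; exact AffStep.loop_body _ _ _ (ih d)

/-- A single affine step in the term position is stable under substitution. -/
lemma AffStep.subst_left {M M' : Tm Loc Ch} (h : AffStep M M') :
    ∀ k (P : Tm Loc Ch), AffStep (M.subst k P) (M'.subst k P) := by
  induction h with
  | passage N a b M h =>
    intro k P
    have := AffStep.passage (N.subst k P) a b (M.subst (k+1) (P.lift 0)) h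
    simpa [Tm.subst, lift_subst_le N k P 0 (by omega)] using this
  | select i M => intro k P; exact AffStep.select i (M.subst k P)
  | reject i j M h => intro k P; exact AffStep.reject i j (M.subst k P) h
  | prefixPop a N i M =>
    intro k P
    have := AffStep.prefixPop a (N.subst (k+1) (P.lift 0)) i (M.subst k P)
    simpa [Tm.subst, lift_subst_le M k P 0 (by omega)] using this
  | prefixPush P a N i M => intro k Q; exact AffStep.prefixPush _ _ _ _ _
  | assoc P i N M => intro k Q; exact AffStep.assoc _ _ _ _
  | push_left N N' a M h ih => intro k P; exact AffStep.push_left _ _ _ _ (ih k P)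
  | push_right N a M M' h ih => intro k P; exact AffStep.push_right _ _ _ _ (ih k P)
  | pop_body a M M' h ih => intro k P; exact AffStep.pop_body _ _ _ (ih (k+1) (P.lift 0))
  | case_left M M' i N h ih => intro k P; exact AffStep.case_left _ _ _ _ (ih k P)
  | case_right M i N N' h ih => intro k P; exact AffStep.case_right _ _ _ _ (ih k P)
  | loop_body M M' i h ih => intro k P; exact AffStep.loop_body _ _ _ (ih k P)

abbrev Aff (M N : Tm Loc Ch) : Prop := Relation.ReflTransGen AffStep M N

lemma Aff.push_left {A A' : Tm Loc Ch} (h : Aff A A') (a : Loc) (B : Tm Loc Ch) :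
    Aff (.push A a B) (.push A' a B) :=
  Relation.ReflTransGen.lift (fun t => Tm.push t a B)
    (fun _ _ s => AffStep.push_left _ _ _ _ s) _ _ h

lemma Aff.push_right (A : Tm Loc Ch) (a : Loc) {B B' : Tm Loc Ch} (h : Aff B B') :
    Aff (.push A a B) (.push A a B') :=
  Relation.ReflTransGen.lift (fun t => Tm.push A a t)
    (fun _ _ s => AffStep.push_right _ _ _ _ s) _ _ h

lemma Aff.push {A A' B B' : Tm Loc Ch} (h1 : Aff A A') (h2 : Aff B B') (a : Loc) :
    Aff (.push A a B) (.push A' a B') :=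
  (h1.push_left a B).trans (Aff.push_right A' a h2)

lemma Aff.pop (a : Loc) {B B' : Tm Loc Ch} (h : Aff B B') :
    Aff (.pop a B) (.pop a B') :=
  Relation.ReflTransGen.lift (fun t => Tm.pop a t)
    (fun _ _ s => AffStep.pop_body _ _ _ s) _ _ h

lemma Aff.case_left {A A' : Tm Loc Ch} (h : Aff A A') (i : Ch) (B : Tm Loc Ch) :
    Aff (.caseOf A i B) (.caseOf A' i B) :=
  Relation.ReflTransGen.lift (fun t => Tm.caseOf t i B)
    (fun _ _ s => AffStep.case_left _ _ _ _ s) _ _ h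

lemma Aff.case_right (A : Tm Loc Ch) (i : Ch) {B B' : Tm Loc Ch} (h : Aff B B') :
    Aff (.caseOf A i B) (.caseOf A i B') :=
  Relation.ReflTransGen.lift (fun t => Tm.caseOf A i t)
    (fun _ _ s => AffStep.case_right _ _ _ _ s) _ _ h

lemma Aff.caseOf {A A' B B' : Tm Loc Ch} (h1 : Aff A A') (h2 : Aff B B') (i : Ch) :
    Aff (.caseOf A i B) (.caseOf A' i B') :=
  (h1.case_left i B).trans (Aff.case_right A' i h2)

lemma Aff.loop {A A' : Tm Loc Ch} (h : Aff A A') (i : Ch) :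
    Aff (.loop A i) (.loop A' i) :=
  Relation.ReflTransGen.lift (fun t => Tm.loop t i)
    (fun _ _ s => AffStep.loop_body _ _ _ s) _ _ h

lemma Aff.lift {M M' : Tm Loc Ch} (h : Aff M M') (d : ℕ) :
    Aff (M.lift d) (M'.lift d) :=
  Relation.ReflTransGen.lift (fun t => Tm.lift t d)
    (fun _ _ s => AffStep.lift s d) _ _ h

/-- Multi-step reduction of the substituted term. -/
lemma Aff.subst_right (M : Tm Loc Ch) : ∀ {N N' : Tm Loc Ch} (k : ℕ),
    Aff N N' → Aff (M.subst k N) (M.subst k N') := by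
  induction M with
  | var n =>
    intro N N' k h
    by_cases h1 : n = k
    · simpa [Tm.subst, h1] using h
    · simp only [Tm.subst, h1, if_false]
      split <;> exact Relation.ReflTransGen.refl
  | push N a M ihN ihM =>
    intro P P' k h; exact Aff.push (ihN k h) (ihM k h) a
  | pop a M ih =>
    intro N N' k h; exact Aff.pop a (ih (k+1) (h.lift 0))
  | choice i => intro N N' k h; exact Relation.ReflTransGen.refl
  | caseOf M i N ihM ihN =>
    intro P P' k h; exact Aff.caseOf (ihM k h) (ihN k h) i
  | loop M i ih => intro N N' k h; exact Aff.loop (ih k h) i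

lemma Par.refl (M : Tm Loc Ch) : Par M M := by
  induction M with
  | var n => exact Par.var n
  | push N a M ihN ihM => exact Par.push _ _ _ _ _ ihN ihM
  | pop a M ih => exact Par.pop _ _ _ ih
  | choice i => exact Par.choice i
  | caseOf M i N ihM ihN => exact Par.caseOf _ _ _ _ _ ihM ihN
  | loop M i ih => exact Par.loop _ _ _ ih

lemma Par.lift {M M' : Tm Loc Ch} (h : Par M M') : ∀ d, Par (M.lift d) (M'.lift d) := by
  induction h with
  | var n => intro d; simp only [Tm.lift]; split <;> exact Par.var _
  | choice i => intro d; exact Par.choice i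
  | push N N' a M M' h1 h2 ih1 ih2 => intro d; exact Par.push _ _ _ _ _ (ih1 d) (ih2 d)
  | pop a M M' h ih => intro d; exact Par.pop _ _ _ (ih (d+1))
  | caseOf M M' i N N' h1 h2 ih1 ih2 => intro d; exact Par.caseOf _ _ _ _ _ (ih1 d) (ih2 d)
  | loop M M' i h ih => intro d; exact Par.loop _ _ _ (ih d)
  | beta N N' a M M' h1 h2 ih1 ih2 =>
    intro d
    have := Par.beta (N.lift d) (N'.lift d) a (M.lift (d+1)) (M'.lift (d+1)) (ih1 d) (ih2 (d+1))
    simpa [Tm.lift, lift_subst_ge M' 0 N' d (by omega)] using this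
  | unroll M M' i h ih => intro d; exact Par.unroll _ _ _ (ih d)
lemma Aff.subst_left {A A' : Tm Loc Ch} (h : Aff A A') (k : ℕ) (P : Tm Loc Ch) :
    Aff (A.subst k P) (A'.subst k P) :=
  Relation.ReflTransGen.lift (fun t => Tm.subst t k P)
    (fun _ _ s => AffStep.subst_left s k P) _ _ h

lemma aff_pop_inv {a : Loc} {M K : Tm Loc Ch} (h : Aff (.pop a M) K) :
    ∃ M', K = .pop a M' ∧ Aff M M' := by
  induction h with
  | refl => exact ⟨M, rfl, Relation.ReflTransGen.refl⟩
  | tail h1 h2 ih =>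
    obtain ⟨M', rfl, hM⟩ := ih
    cases h2 with
    | pop_body _ _ M'' s => exact ⟨M'', rfl, hM.tail s⟩

lemma par_pop_inv {a : Loc} {M K : Tm Loc Ch} (h : Par (.pop a M) K) :
    ∃ M', K = .pop a M' ∧ Par M M' := by
  cases h with
  | pop _ _ M' hM => exact ⟨M', rfl, hM⟩

/-- Key commutation: an affine step followed (in parallel) by a duplicating
step can be completed. -/
lemma comm1 {M M' : Tm Loc Ch} (hs : AffStep M M') :
    ∀ {X : Tm Loc Ch}, Par M X →
    ∃ M'' X', Aff M' M'' ∧ Par M'' X' ∧ Aff X X' := by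
  induction hs with
  | passage N a b M h =>
    intro X hp
    cases hp with
    | push _ N₁ _ _ K hN hK =>
      obtain ⟨M₂, rfl, hM⟩ := par_pop_inv hK
      exact ⟨_, .pop a (.push (N₁.lift 0) b M₂), Relation.ReflTransGen.refl,
        Par.pop _ _ _ (Par.push _ _ _ _ _ (hN.lift 0) hM),
        Relation.ReflTransGen.single (AffStep.passage N₁ a b M₂ h)⟩
    | beta _ N₁ _ _ M₁ hN hM => exact absurd rfl h
  | select i M =>
    intro X hp
    cases hp with
    | caseOf _ C _ _ M₂ hC hM =>
      cases hC
      exact ⟨M, M₂, Relation.ReflTransGen.refl, hM,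
        Relation.ReflTransGen.single (AffStep.select i M₂)⟩
  | reject i j M h =>
    intro X hp
    cases hp with
    | caseOf _ C _ _ M₂ hC hM =>
      cases hC
      exact ⟨.choice i, .choice i, Relation.ReflTransGen.refl, Par.choice i,
        Relation.ReflTransGen.single (AffStep.reject i j M₂ h)⟩
  | prefixPop a N i M =>
    intro X hp
    cases hp with
    | caseOf _ K _ _ M₂ hK hM =>
      obtain ⟨N₂, rfl, hN⟩ := par_pop_inv hK
      exact ⟨_, .pop a (.caseOf N₂ i (M₂.lift 0)), Relation.ReflTransGen.refl,
        Par.pop _ _ _ (Par.caseOf _ _ _ _ _ hN (hM.lift 0)),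
        Relation.ReflTransGen.single (AffStep.prefixPop a N₂ i M₂)⟩
  | prefixPush P a N i M =>
    intro X hp
    cases hp with
    | caseOf _ K _ _ M₂ hK hM =>
      cases hK with
      | push _ P₁ _ _ N₁ hP hN =>
        exact ⟨_, .push P₁ a (.caseOf N₁ i M₂), Relation.ReflTransGen.refl,
          Par.push _ _ _ _ _ hP (Par.caseOf _ _ _ _ _ hN hM),
          Relation.ReflTransGen.single (AffStep.prefixPush P₁ a N₁ i M₂)⟩
      | beta _ P₁ _ N₀ N₁ hP hN =>
        refine ⟨.push P a (.pop a (.caseOf N₀ i (M.lift 0))),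
          (Tm.caseOf N₁ i (M₂.lift 0)).subst 0 P₁,
          Relation.ReflTransGen.single
            (AffStep.push_right _ _ _ _ (AffStep.prefixPop a N₀ i M)),
          Par.beta _ _ _ _ _ hP (Par.caseOf _ _ _ _ _ hN (hM.lift 0)), ?_⟩
        simp only [Tm.subst, subst_lift_self]
        exact Relation.ReflTransGen.refl
  | assoc P i N M =>
    intro X hp
    cases hp with
    | caseOf _ K _ _ M₂ hK hM =>
      cases hK with
      | caseOf _ P₁ _ _ N₁ hP hN =>
        exact ⟨_, .caseOf P₁ i (.caseOf N₁ i M₂), Relation.ReflTransGen.refl,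
          Par.caseOf _ _ _ _ _ hP (Par.caseOf _ _ _ _ _ hN hM),
          Relation.ReflTransGen.single (AffStep.assoc P₁ i N₁ M₂)⟩
  | push_left N N' a M s ih =>
    intro X hp
    cases hp with
    | push _ N₁ _ _ M₂ hN hM =>
      obtain ⟨N'', N₁', hA, hP, hB⟩ := ih hN
      exact ⟨.push N'' a M, .push N₁' a M₂, hA.push_left a M,
        Par.push _ _ _ _ _ hP hM, hB.push_left a M₂⟩
    | beta _ N₁ _ M₀ M₁ hN hM =>
      obtain ⟨N'', N₁', hA, hP, hB⟩ := ih hN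
      exact ⟨.push N'' a (.pop a M₀), M₁.subst 0 N₁', hA.push_left a _,
        Par.beta _ _ _ _ _ hP hM, Aff.subst_right M₁ 0 hB⟩
  | push_right N a M M' s ih =>
    intro X hp
    cases hp with
    | push _ N₁ _ _ M₂ hN hM =>
      obtain ⟨M'', M₂', hA, hP, hB⟩ := ih hM
      exact ⟨.push N a M'', .push N₁ a M₂', Aff.push_right N a hA,
        Par.push _ _ _ _ _ hN hP, Aff.push_right N₁ a hB⟩
    | beta _ N₁ _ M₀ M₁ hN hM =>
      obtain ⟨K'', K', hA, hP, hB⟩ := ih (Par.pop a M₀ M₁ hM)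
      cases s with
      | pop_body _ _ M₀' s₀ =>
        obtain ⟨Q'', rfl, hQA⟩ := aff_pop_inv hA
        obtain ⟨Q', rfl, hQP⟩ := par_pop_inv hP
        obtain ⟨R', hR, hRA⟩ := aff_pop_inv hB
        obtain rfl : Q' = R' := by injection hR
        exact ⟨.push N a (.pop a Q''), Q'.subst 0 N₁, Aff.push_right N a hA,
          Par.beta _ _ _ _ _ hN hQP, Aff.subst_left hRA 0 N₁⟩
  | pop_body a M M' s ih =>
    intro X hp
    cases hp with
    | pop _ _ M₁ hM =>
      obtain ⟨M'', M₁', hA, hP, hB⟩ := ih hM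
      exact ⟨.pop a M'', .pop a M₁', Aff.pop a hA, Par.pop _ _ _ hP, Aff.pop a hB⟩
  | case_left M M' i N s ih =>
    intro X hp
    cases hp with
    | caseOf _ M₁ _ _ N₂ hM hN =>
      obtain ⟨M'', M₁', hA, hP, hB⟩ := ih hM
      exact ⟨.caseOf M'' i N, .caseOf M₁' i N₂, hA.case_left i N,
        Par.caseOf _ _ _ _ _ hP hN, hB.case_left i N₂⟩
  | case_right M i N N' s ih =>
    intro X hp
    cases hp with
    | caseOf _ M₁ _ _ N₂ hM hN =>
      obtain ⟨N'', N₂', hA, hP, hB⟩ := ih hN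
      exact ⟨.caseOf M i N'', .caseOf M₁ i N₂', Aff.case_right M i hA,
        Par.caseOf _ _ _ _ _ hM hP, Aff.case_right M₁ i hB⟩
  | loop_body M M' i s ih =>
    intro X hp
    cases hp with
    | loop _ M₁ _ hM =>
      obtain ⟨M'', M₁', hA, hP, hB⟩ := ih hM
      exact ⟨.loop M'' i, .loop M₁' i, hA.loop i, Par.loop _ _ _ hP, hB.loop i⟩
    | unroll _ M₁ _ hM =>
      obtain ⟨M'', M₁', hA, hP, hB⟩ := ih hM
      exact ⟨.loop M'' i, .caseOf M₁' i (.loop M₁' i), hA.loop i,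
        Par.unroll _ _ _ hP, Aff.caseOf hB (hB.loop i) i⟩
private lemma sg {a b : Tm Loc Ch} (h : AffStep a b) : Aff a b :=
  Relation.ReflTransGen.single h

private lemma sg2 {a b c : Tm Loc Ch} (h1 : AffStep a b) (h2 : AffStep b c) : Aff a c :=
  (sg h1).tail h2

/-- Local confluence of affine reduction. -/
lemma lc : ∀ {a b : Tm Loc Ch}, AffStep a b → ∀ {c}, AffStep a c →
    ∃ d, Aff b d ∧ Aff c d := by
  intro a b h1
  induction h1 with
  | passage N aa bb M h =>
    intro c h2
    cases h2 with
    | passage => exact ⟨_, Relation.ReflTransGen.refl, Relation.ReflTransGen.refl⟩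
    | push_left _ N₂ _ _ s =>
      exact ⟨.pop aa (.push (N₂.lift 0) bb M),
        sg (.pop_body _ _ _ (.push_left _ _ _ _ (s.lift 0))),
        sg (.passage N₂ aa bb M h)⟩
    | push_right _ _ _ K s =>
      cases s with
      | pop_body _ _ M₂ s0 =>
        exact ⟨.pop aa (.push (N.lift 0) bb M₂),
          sg (.pop_body _ _ _ (.push_right _ _ _ _ s0)),
          sg (.passage N aa bb M₂ h)⟩
  | select i M =>
    intro c h2
    cases h2 with
    | select => exact ⟨_, Relation.ReflTransGen.refl, Relation.ReflTransGen.refl⟩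
    | reject _ _ _ h => exact absurd rfl h
    | case_left _ K _ _ s => cases s
    | case_right _ _ _ M₂ s => exact ⟨M₂, sg s, sg (.select i M₂)⟩
  | reject i j M h =>
    intro c h2
    cases h2 with
    | reject => exact ⟨_, Relation.ReflTransGen.refl, Relation.ReflTransGen.refl⟩
    | select => exact absurd rfl h
    | case_left _ K _ _ s => cases s
    | case_right _ _ _ M₂ s =>
      exact ⟨.choice i, Relation.ReflTransGen.refl, sg (.reject i j M₂ h)⟩
  | prefixPop aa N i M =>
    intro c h2
    cases h2 with
    | prefixPop => exact ⟨_, Relation.ReflTransGen.refl, Relation.ReflTransGen.refl⟩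
    | case_left _ K _ _ s =>
      cases s with
      | pop_body _ _ N₂ s0 =>
        exact ⟨.pop aa (.caseOf N₂ i (M.lift 0)),
          sg (.pop_body _ _ _ (.case_left _ _ _ _ s0)),
          sg (.prefixPop aa N₂ i M)⟩
    | case_right _ _ _ M₂ s =>
      exact ⟨.pop aa (.caseOf N i (M₂.lift 0)),
        sg (.pop_body _ _ _ (.case_right _ _ _ _ (s.lift 0))),
        sg (.prefixPop aa N i M₂)⟩
  | prefixPush P aa N i M =>
    intro c h2
    cases h2 with
    | prefixPush => exact ⟨_, Relation.ReflTransGen.refl, Relation.ReflTransGen.refl⟩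
    | case_left _ K _ _ s =>
      cases s with
      | passage _ cc _ N₀ hcc =>
        exact ⟨.pop cc (.push (P.lift 0) aa (.caseOf N₀ i (M.lift 0))),
          sg2 (.push_right _ _ _ _ (.prefixPop cc N₀ i M))
            (.passage P cc aa (.caseOf N₀ i (M.lift 0)) hcc),
          sg2 (.prefixPop cc (.push (P.lift 0) aa N₀) i M)
            (.pop_body _ _ _ (.prefixPush (P.lift 0) aa N₀ i (M.lift 0)))⟩
      | push_left _ P₂ _ _ s0 =>
        exact ⟨.push P₂ aa (.caseOf N i M),
          sg (.push_left _ _ _ _ s0), sg (.prefixPush P₂ aa N i M)⟩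
      | push_right _ _ _ N₂ s0 =>
        exact ⟨.push P aa (.caseOf N₂ i M),
          sg (.push_right _ _ _ _ (.case_left _ _ _ _ s0)),
          sg (.prefixPush P aa N₂ i M)⟩
    | case_right _ _ _ M₂ s =>
      exact ⟨.push P aa (.caseOf N i M₂),
        sg (.push_right _ _ _ _ (.case_right _ _ _ _ s)),
        sg (.prefixPush P aa N i M₂)⟩
  | assoc P i N M =>
    intro c h2
    cases h2 with
    | assoc => exact ⟨_, Relation.ReflTransGen.refl, Relation.ReflTransGen.refl⟩
    | case_left _ K _ _ s =>
      cases s with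
      | select =>
        exact ⟨.caseOf N i M, sg (.select i (.caseOf N i M)), Relation.ReflTransGen.refl⟩
      | reject k _ _ hk =>
        exact ⟨.choice k, sg (.reject k i (.caseOf N i M) hk), sg (.reject k i M hk)⟩
      | prefixPop bb P₀ =>
        exact ⟨.pop bb (.caseOf P₀ i (.caseOf (N.lift 0) i (M.lift 0))),
          sg (.prefixPop bb P₀ i (.caseOf N i M)),
          sg2 (.prefixPop bb (.caseOf P₀ i (N.lift 0)) i M)
            (.pop_body _ _ _ (.assoc P₀ i (N.lift 0) (M.lift 0)))⟩
      | prefixPush Q bb P₀ =>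
        exact ⟨.push Q bb (.caseOf P₀ i (.caseOf N i M)),
          sg (.prefixPush Q bb P₀ i (.caseOf N i M)),
          sg2 (.prefixPush Q bb (.caseOf P₀ i N) i M)
            (.push_right _ _ _ _ (.assoc P₀ i N M))⟩
      | assoc P₀ _ N₀ =>
        exact ⟨.caseOf P₀ i (.caseOf N₀ i (.caseOf N i M)),
          sg (.assoc P₀ i N₀ (.caseOf N i M)),
          sg2 (.assoc P₀ i (.caseOf N₀ i N) M)
            (.case_right _ _ _ _ (.assoc N₀ i N M))⟩
      | case_left _ P₂ _ _ s0 =>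
        exact ⟨.caseOf P₂ i (.caseOf N i M),
          sg (.case_left _ _ _ _ s0), sg (.assoc P₂ i N M)⟩
      | case_right _ _ _ N₂ s0 =>
        exact ⟨.caseOf P i (.caseOf N₂ i M),
          sg (.case_right _ _ _ _ (.case_left _ _ _ _ s0)),
          sg (.assoc P i N₂ M)⟩
    | case_right _ _ _ M₂ s =>
      exact ⟨.caseOf P i (.caseOf N i M₂),
        sg (.case_right _ _ _ _ (.case_right _ _ _ _ s)),
        sg (.assoc P i N M₂)⟩
  | push_left N N₂ bb M s ih =>
    intro c h2
    cases h2 with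
    | passage _ aa _ M₀ h =>
      exact ⟨.pop aa (.push (N₂.lift 0) bb M₀),
        sg (.passage N₂ aa bb M₀ h),
        sg (.pop_body _ _ _ (.push_left _ _ _ _ (s.lift 0)))⟩
    | push_left _ N₃ _ _ s' =>
      obtain ⟨d0, hl, hr⟩ := ih s'
      exact ⟨.push d0 bb M, hl.push_left bb M, hr.push_left bb M⟩
    | push_right _ _ _ M₂ s' =>
      exact ⟨.push N₂ bb M₂, sg (.push_right _ _ _ _ s'), sg (.push_left _ _ _ _ s)⟩
  | push_right N bb M M₂ s ih =>
    intro c h2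
    cases h2 with
    | passage _ aa _ M₀ h =>
      cases s with
      | pop_body _ _ M₀₂ s0 =>
        exact ⟨.pop aa (.push (N.lift 0) bb M₀₂),
          sg (.passage N aa bb M₀₂ h),
          sg (.pop_body _ _ _ (.push_right _ _ _ _ s0))⟩
    | push_left _ N₃ _ _ s' =>
      exact ⟨.push N₃ bb M₂, sg (.push_left _ _ _ _ s'), sg (.push_right _ _ _ _ s)⟩
    | push_right _ _ _ M₃ s' =>
      obtain ⟨d0, hl, hr⟩ := ih s'
      exact ⟨.push N bb d0, Aff.push_right N bb hl, Aff.push_right N bb hr⟩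
  | pop_body aa M M₂ s ih =>
    intro c h2
    cases h2 with
    | pop_body _ _ M₃ s' =>
      obtain ⟨d0, hl, hr⟩ := ih s'
      exact ⟨.pop aa d0, Aff.pop aa hl, Aff.pop aa hr⟩
  | case_left M M₂ i N s ih =>
    intro c h2
    cases h2 with
    | select => cases s
    | reject => cases s
    | prefixPop aa M₀ =>
      cases s with
      | pop_body _ _ M₀₂ s0 =>
        exact ⟨.pop aa (.caseOf M₀₂ i (N.lift 0)),
          sg (.prefixPop aa M₀₂ i N),
          sg (.pop_body _ _ _ (.case_left _ _ _ _ s0))⟩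
    | prefixPush Q aa M₀ =>
      cases s with
      | passage _ cc _ M₀' hcc =>
        exact ⟨.pop cc (.push (Q.lift 0) aa (.caseOf M₀' i (N.lift 0))),
          sg2 (.prefixPop cc (.push (Q.lift 0) aa M₀') i N)
            (.pop_body _ _ _ (.prefixPush (Q.lift 0) aa M₀' i (N.lift 0))),
          sg2 (.push_right _ _ _ _ (.prefixPop cc M₀' i N))
            (.passage Q cc aa (.caseOf M₀' i (N.lift 0)) hcc)⟩
      | push_left _ Q₂ _ _ s0 =>
        exact ⟨.push Q₂ aa (.caseOf M₀ i N),
          sg (.prefixPush Q₂ aa M₀ i N), sg (.push_left _ _ _ _ s0)⟩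
      | push_right _ _ _ M₀₂ s0 =>
        exact ⟨.push Q aa (.caseOf M₀₂ i N),
          sg (.prefixPush Q aa M₀₂ i N),
          sg (.push_right _ _ _ _ (.case_left _ _ _ _ s0))⟩
    | assoc P _ N₀ =>
      cases s with
      | select =>
        exact ⟨.caseOf M₂ i N, Relation.ReflTransGen.refl, sg (.select i (.caseOf M₂ i N))⟩
      | reject k _ _ hk =>
        exact ⟨.choice k, sg (.reject k i N hk), sg (.reject k i (.caseOf N₀ i N) hk)⟩
      | prefixPop aa P₀ =>
        exact ⟨.pop aa (.caseOf P₀ i (.caseOf (N₀.lift 0) i (N.lift 0))),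
          sg2 (.prefixPop aa (.caseOf P₀ i (N₀.lift 0)) i N)
            (.pop_body _ _ _ (.assoc P₀ i (N₀.lift 0) (N.lift 0))),
          sg (.prefixPop aa P₀ i (.caseOf N₀ i N))⟩
      | prefixPush Q aa P₀ =>
        exact ⟨.push Q aa (.caseOf P₀ i (.caseOf N₀ i N)),
          sg2 (.prefixPush Q aa (.caseOf P₀ i N₀) i N)
            (.push_right _ _ _ _ (.assoc P₀ i N₀ N)),
          sg (.prefixPush Q aa P₀ i (.caseOf N₀ i N))⟩
      | assoc P₀ _ N₁ =>
        exact ⟨.caseOf P₀ i (.caseOf N₁ i (.caseOf N₀ i N)),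
          sg2 (.assoc P₀ i (.caseOf N₁ i N₀) N)
            (.case_right _ _ _ _ (.assoc N₁ i N₀ N)),
          sg (.assoc P₀ i N₁ (.caseOf N₀ i N))⟩
      | case_left _ P₂ _ _ s0 =>
        exact ⟨.caseOf P₂ i (.caseOf N₀ i N),
          sg (.assoc P₂ i N₀ N), sg (.case_left _ _ _ _ s0)⟩
      | case_right _ _ _ N₀₂ s0 =>
        exact ⟨.caseOf P i (.caseOf N₀₂ i N),
          sg (.assoc P i N₀₂ N),
          sg (.case_right _ _ _ _ (.case_left _ _ _ _ s0))⟩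
    | case_left _ M₃ _ _ s' =>
      obtain ⟨d0, hl, hr⟩ := ih s'
      exact ⟨.caseOf d0 i N, hl.case_left i N, hr.case_left i N⟩
    | case_right _ _ _ N₂ s' =>
      exact ⟨.caseOf M₂ i N₂, sg (.case_right _ _ _ _ s'), sg (.case_left _ _ _ _ s)⟩
  | case_right M i N N₂ s ih =>
    intro c h2
    cases h2 with
    | select => exact ⟨N₂, sg (.select i N₂), sg s⟩
    | reject k _ _ hk =>
      exact ⟨.choice k, sg (.reject k i N₂ hk), Relation.ReflTransGen.refl⟩
    | prefixPop aa M₀ =>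
      exact ⟨.pop aa (.caseOf M₀ i (N₂.lift 0)),
        sg (.prefixPop aa M₀ i N₂),
        sg (.pop_body _ _ _ (.case_right _ _ _ _ (s.lift 0)))⟩
    | prefixPush Q aa M₀ =>
      exact ⟨.push Q aa (.caseOf M₀ i N₂),
        sg (.prefixPush Q aa M₀ i N₂),
        sg (.push_right _ _ _ _ (.case_right _ _ _ _ s))⟩
    | assoc P _ N₀ =>
      exact ⟨.caseOf P i (.caseOf N₀ i N₂),
        sg (.assoc P i N₀ N₂),
        sg (.case_right _ _ _ _ (.case_right _ _ _ _ s))⟩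
    | case_left _ M₃ _ _ s' =>
      exact ⟨.caseOf M₃ i N₂, sg (.case_left _ _ _ _ s'), sg (.case_right _ _ _ _ s)⟩
    | case_right _ _ _ N₃ s' =>
      obtain ⟨d0, hl, hr⟩ := ih s'
      exact ⟨.caseOf M i d0, Aff.case_right M i hl, Aff.case_right M i hr⟩
  | loop_body M M₂ i s ih =>
    intro c h2
    cases h2 with
    | loop_body _ M₃ _ s' =>
      obtain ⟨d0, hl, hr⟩ := ih s'
      exact ⟨.loop d0 i, hl.loop i, hr.loop i⟩
lemma mu_le_of_aff {M N : Tm Loc Ch} (h : Aff M N) : mu N ≤ mu M := by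
  induction h with
  | refl => exact le_rfl
  | tail _ s ih => exact le_trans (le_of_lt s.mu_lt) ih

/-- Newman's lemma for affine reduction, by induction on the measure. -/
lemma newman : ∀ n (a : Tm Loc Ch), mu a ≤ n → ∀ b c, Aff a b → Aff a c →
    ∃ d, Aff b d ∧ Aff c d := by
  intro n
  induction n with
  | zero => intro a ha; have := two_le_mu a; omega
  | succ n ihn =>
    intro a ha b c h1 h2
    rcases h1.cases_head with rfl | ⟨b₁, hab₁, hb₁b⟩
    · exact ⟨c, h2, Relation.ReflTransGen.refl⟩
    rcases h2.cases_head with rfl | ⟨c₁, hac₁, hc₁c⟩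
    · exact ⟨b, Relation.ReflTransGen.refl, Relation.ReflTransGen.head hab₁ hb₁b⟩
    obtain ⟨e, he1, he2⟩ := lc hab₁ hac₁
    have hb₁ : mu b₁ ≤ n := by have := hab₁.mu_lt; omega
    have hc₁ : mu c₁ ≤ n := by have := hac₁.mu_lt; omega
    obtain ⟨d₁, hbd₁, hed₁⟩ := ihn b₁ hb₁ b e hb₁b he1
    obtain ⟨d, hcd, hd₁d⟩ := ihn c₁ hc₁ c d₁ hc₁c (he2.trans hed₁)
    exact ⟨d, hbd₁.trans hd₁d, hcd⟩

lemma nf_unique_reduct {P D : Tm Loc Ch} (h : Aff P D) (hnf : ∀ Q, ¬ AffStep P Q) :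
    D = P := by
  rcases h.cases_head with rfl | ⟨P₁, hs, _⟩
  · rfl
  · exact absurd hs (hnf P₁)

lemma main_aux : ∀ n (M : Tm Loc Ch), mu M ≤ n → ∀ N, Par M N → ∀ P, Aff M P →
    (∀ Q, ¬ AffStep P Q) → ∃ Q, Par P Q ∧ Aff N Q := by
  intro n
  induction n with
  | zero => intro M hM; have := two_le_mu M; omega
  | succ n ihn =>
    intro M hM N hN P hred hnf
    rcases hred.cases_head with rfl | ⟨M₁, hMM₁, hM₁P⟩
    · exact ⟨N, hN, Relation.ReflTransGen.refl⟩
    obtain ⟨M₂, N₂, hM₁M₂, hParM₂N₂, hNN₂⟩ := comm1 hMM₁ hN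
    obtain ⟨D, hPD, hM₂D⟩ := newman (mu M₁) M₁ le_rfl P M₂ hM₁P hM₁M₂
    rw [nf_unique_reduct hPD hnf] at hM₂D
    have hmu : mu M₂ ≤ n := le_trans (mu_le_of_aff hM₁M₂) (by have := hMM₁.mu_lt; omega)
    obtain ⟨Q, hPQ, hQ⟩ := ihn M₂ hmu N₂ hParM₂N₂ P hM₂D hnf
    exact ⟨Q, hPQ, hNN₂.trans hQ⟩
/-- Affine normalization commutes with parallel duplicating reduction. -/
theorem affnf_commutes_with_par (M N P : Tm Loc Ch) (hP : AffNF M P) (hN : Par M N) :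
    ∃ Q : Tm Loc Ch, Par P Q ∧ Relation.ReflTransGen AffStep N Q := by
  obtain ⟨hred, hnf⟩ := hP
  exact main_aux (mu M) M le_rfl N hN P hred hnf
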